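/- For matrices E ≻ 0, Y, and scalars p > 0, γ > 0: the LMI block condition [[pE, (AE + BY)ᵀ], [AE + BY, E]] ⪰ 0 implies that the quadratic function B_0(x) = xᵀE⁻¹x − γ with linear feedback u = YE⁻¹x satisfies B_0(Ax + Bu(x)) ≤ p·B_0(x) + (p−1)γ for all x with B_0(x) ≤ 0 (indeed for all x). -/

import Mathlib

open Matrix

/-- the LMI [[pE, (AE+BY)ᵀ], [AE+BY, E]] ⪰ 0 implies that
B_0(x) = xᵀE⁻¹x − γ with feedback u = YE⁻¹x satisfies
B_0(Ax + Bu(x)) ≤ p·B_0(x) + (p−1)γ for all x. -/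
theorem lmi_implies_decrease
    {n m : ℕ} (A : Matrix (Fin n) (Fin n) ℝ) (B : Matrix (Fin n) (Fin m) ℝ)
    (E : Matrix (Fin n) (Fin n) ℝ) (Y : Matrix (Fin m) (Fin n) ℝ)
    (p γ : ℝ) (hp : 0 < p) (hγ : 0 < γ)
    (hE : E.PosDef)
    (hLMI : (Matrix.fromBlocks (p • E) (A * E + B * Y)ᵀ
      (A * E + B * Y) E).PosSemidef) :
    ∀ x : Fin n → ℝ,
      (fun z : Fin n → ℝ => z ⬝ᵥ (E⁻¹ *ᵥ z) - γ)
          (A *ᵥ x + B *ᵥ ((Y * E⁻¹) *ᵥ x)) ≤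
        p * ((fun z : Fin n → ℝ => z ⬝ᵥ (E⁻¹ *ᵥ z) - γ) x) + (p - 1) * γ := by
  intro x
  simp only
  have hdet : IsUnit E.det := isUnit_iff_ne_zero.mpr hE.det_pos.ne'
  have hEinv : E * E⁻¹ = 1 := E.mul_nonsing_inv hdet
  have hinvE : E⁻¹ * E = 1 := E.nonsing_inv_mul hdet
  have hsym : E⁻¹ᵀ = E⁻¹ := by
    have := hE.isHermitian.inv
    simpa [Matrix.IsHermitian, Matrix.conjTranspose_eq_transpose_of_trivial] using this
  set M := A * E + B * Y with hM
  set w := E⁻¹ *ᵥ x with hw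
  set z := M *ᵥ w with hz
  have hz' : A *ᵥ x + B *ᵥ ((Y * E⁻¹) *ᵥ x) = z := by
    rw [hz, hM, hw, Matrix.add_mulVec, Matrix.mulVec_mulVec, Matrix.mulVec_mulVec,
      Matrix.mul_assoc A E E⁻¹, hEinv, Matrix.mul_one, Matrix.mulVec_mulVec,
      Matrix.mul_assoc B Y E⁻¹]
  rw [hz']
  have key : z ⬝ᵥ (E⁻¹ *ᵥ z) ≤ p * (x ⬝ᵥ (E⁻¹ *ᵥ x)) := by
    have h0 := hLMI.dotProduct_mulVec_nonneg (Sum.elim w (-(E⁻¹ *ᵥ z)))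
    simp only [Matrix.fromBlocks_mulVec, star_trivial, Sum.elim_comp_inl, Sum.elim_comp_inr,
      sumElim_dotProduct_sumElim] at h0
    have e1 : E *ᵥ w = x := by
      rw [hw, Matrix.mulVec_mulVec, hEinv]; simp
    have e2 : E *ᵥ (-(E⁻¹ *ᵥ z)) = -z := by
      rw [Matrix.mulVec_neg, Matrix.mulVec_mulVec, hEinv]; simp
    have e3 : Mᵀ *ᵥ (-(E⁻¹ *ᵥ z)) = -(Mᵀ *ᵥ (E⁻¹ *ᵥ z)) := by
      rw [Matrix.mulVec_neg]
    have d1 : w ⬝ᵥ x = x ⬝ᵥ (E⁻¹ *ᵥ x) := by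
      rw [hw, dotProduct_comm, Matrix.dotProduct_mulVec, ← Matrix.mulVec_transpose, hsym]
    have d2 : w ⬝ᵥ (Mᵀ *ᵥ (E⁻¹ *ᵥ z)) = z ⬝ᵥ (E⁻¹ *ᵥ z) := by
      rw [Matrix.dotProduct_mulVec w Mᵀ, ← Matrix.mulVec_transpose, Matrix.transpose_transpose,
        ← hz]
    have d3 : (-(E⁻¹ *ᵥ z)) ⬝ᵥ z = -(z ⬝ᵥ (E⁻¹ *ᵥ z)) := by
      rw [neg_dotProduct, dotProduct_comm]
    have d4 : (-(E⁻¹ *ᵥ z)) ⬝ᵥ (-z) = z ⬝ᵥ (E⁻¹ *ᵥ z) := by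
      rw [neg_dotProduct, dotProduct_neg, neg_neg, dotProduct_comm]
    rw [Matrix.smul_mulVec, dotProduct_add, dotProduct_add,
      dotProduct_smul, e1, e2, e3] at h0
    rw [dotProduct_neg, d1, d2, d3, d4] at h0
    simp only [smul_eq_mul] at h0
    linarith
  linarith
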